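/- arXiv:1108.1763 — 6 statements merged into one kernel-verified Lean document; each statement's English description precedes it below -/
import Mathlib

section
/- For every x in the projective line over a finite field of characteristic 3, θ(x) = ψ(s(ψ(x))), i.e., the map θ is conjugate via ψ to the inverse-square map s. -/
open OnePoint

variable (F : Type*) [Field F] [DecidableEq F]

/-- The map `θ(x) = x + x⁻¹`, with `θ(0) = θ(∞) = ∞`. -/
def theta : OnePoint F → OnePoint F
  | Option.some x => if x = 0 then ∞ else Option.some (x + x⁻¹)
  | Option.none => ∞

/-- The inverse-square map `s(x) = x⁻²`, with `s(0) = ∞`, `s(∞) = 0`. -/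
def sMap : OnePoint F → OnePoint F
  | Option.some x => if x = 0 then ∞ else Option.some (x⁻¹ ^ 2)
  | Option.none => Option.some 0

/-- The involution `ψ(x) = (x+1)/(x-1)`, with `ψ(1) = ∞`, `ψ(∞) = 1`. -/
def psi : OnePoint F → OnePoint F
  | Option.some x => if x = 1 then ∞ else Option.some ((x + 1) / (x - 1))
  | Option.none => Option.some 1

lemma psi_coe (a : F) (h : a ≠ 1) :
    psi F (a : OnePoint F) = (((a + 1) / (a - 1) : F) : OnePoint F) := by
  show (if a = 1 then ∞ else Option.some ((a + 1) / (a - 1))) = _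
  exact if_neg h

lemma psi_one : psi F ((1 : F) : OnePoint F) = ∞ := by
  show (if (1:F) = 1 then ∞ else _) = ∞
  exact if_pos rfl

lemma psi_infty : psi F ∞ = ((1 : F) : OnePoint F) := rfl

lemma sMap_coe (a : F) (h : a ≠ 0) :
    sMap F (a : OnePoint F) = ((a⁻¹ ^ 2 : F) : OnePoint F) := by
  show (if a = 0 then ∞ else Option.some (a⁻¹ ^ 2)) = _
  exact if_neg h

lemma sMap_zero : sMap F ((0 : F) : OnePoint F) = ∞ := by
  show (if (0:F) = 0 then ∞ else _) = ∞
  exact if_pos rfl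

lemma sMap_infty : sMap F ∞ = ((0 : F) : OnePoint F) := rfl

lemma theta_coe (a : F) (h : a ≠ 0) :
    theta F (a : OnePoint F) = ((a + a⁻¹ : F) : OnePoint F) := by
  show (if a = 0 then ∞ else Option.some (a + a⁻¹)) = _
  exact if_neg h

theorem theta_eq_psi_s_psi [CharP F 3] (x : OnePoint F) :
    theta F x = psi F (sMap F (psi F x)) := by
  have h3 : (3:F) = 0 := CharP.cast_eq_zero F 3
  have h2 : (2:F) ≠ 0 := by
    intro h; exact one_ne_zero (α := F) (by linear_combination h3 - h)
  cases x with
  | infty =>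
    rw [psi_infty, sMap_coe F 1 one_ne_zero, show ((1:F)⁻¹ ^ 2) = 1 by norm_num, psi_one]
    rfl
  | coe a =>
    by_cases h1 : a = 1
    · subst h1
      rw [psi_one, sMap_infty, psi_coe F 0 (by norm_num)]
      rw [theta_coe F 1 one_ne_zero]
      congr 1
      field_simp
      linear_combination -h3
    · by_cases h0 : a = 0
      · subst h0
        have e1 : ((0:F) + 1) / (0 - 1) = -1 := by norm_num
        have hn1 : (-1:F) ≠ 0 := by norm_num
        have hn1' : (-1:F) ≠ 1 := fun h => h2 (by linear_combination -h)
        rw [psi_coe F 0 zero_ne_one, e1, sMap_coe F (-1) hn1,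
          show ((-1:F)⁻¹)^2 = 1 by norm_num, psi_one]
        show (if (0:F) = 0 then ∞ else _) = ∞
        exact if_pos rfl
      · have ha1 : a - 1 ≠ 0 := sub_ne_zero.mpr h1
        rw [theta_coe F a h0, psi_coe F a h1]
        by_cases hm1 : a = -1
        · subst hm1
          rw [show ((-1:F) + 1) / (-1 - 1) = 0 by norm_num, sMap_zero, psi_infty]
          congr 1
          field_simp
          linear_combination -h3
        · have hap1 : a + 1 ≠ 0 := fun h => hm1 (by linear_combination h)
          have hbne : (a + 1) / (a - 1) ≠ 0 := div_ne_zero hap1 ha1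
          rw [sMap_coe F _ hbne]
          have hbsq : ((a + 1) / (a - 1))⁻¹ ^ 2 ≠ 1 := by
            intro h
            field_simp at h
            exact h0 (by linear_combination -h - a * h3)
          rw [psi_coe F _ hbsq]
          congr 1
          rw [eq_div_iff (sub_ne_zero.mpr hbsq)]
          field_simp
          ring_nf
          linear_combination (-2*a - 2*a^3) * h3
end

section
/- Let α ∈ P¹(F_{3^n}) \ {−1, 1, ∞}. Then θ^k(α) = α for a positive integer k if and only if s^k(ψ(α)) = ψ(α), i.e., α is θ-periodic of period k if and only if ψ(α) is s-periodic of period k. -/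
open OnePoint

variable (F : Type*) [Field F] [DecidableEq F]

lemma psi_involution (h3 : (3 : F) = 0) (a : OnePoint F) : psi F (psi F a) = a := by
  have h2 : (2 : F) ≠ 0 := by
    intro h
    exact one_ne_zero (α := F) (by linear_combination h3 - h)
  match a with
  | Option.none => simp [psi]; rfl
  | Option.some x =>
    by_cases hx : x = 1
    · simp [psi, hx]; rfl
    · have hx1 : x - 1 ≠ 0 := sub_ne_zero.mpr hx
      have hne : (x + 1) / (x - 1) ≠ 1 := by
        intro h
        have := (div_eq_one_iff_eq hx1).mp h
        exact h2 (by linear_combination this)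
      simp only [psi, hx, if_false, hne, ↓reduceIte]
      congr 1
      field_simp
      rw [show x + 1 + (x - 1) = 2 * x by ring, show x + 1 - (x - 1) = 2 by ring, div_eq_iff h2]; ring

lemma conj_lemma (h3 : (3 : F) = 0) (a : OnePoint F) :
    psi F (theta F a) = sMap F (psi F a) := by
  have h2 : (2 : F) ≠ 0 := by
    intro h
    exact one_ne_zero (α := F) (by linear_combination h3 - h)
  match a with
  | Option.none => simp [psi, theta, sMap]; rfl
  | Option.some x =>
    by_cases h0 : x = 0
    · subst h0
      simp [psi, theta, sMap]; rfl
    by_cases h1 : x = 1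
    · subst h1
      have h11 : (1 : F) + 1⁻¹ = 2 := by norm_num
      have h21 : (2 : F) ≠ 1 := by
        intro h; exact one_ne_zero (α := F) (by linear_combination h)
      simp only [theta, psi, sMap, if_neg one_ne_zero, h11, if_neg h21, if_pos rfl, ↓reduceIte, h0, h21]
      congr 1
      have hnum : (2 : F) + 1 = 0 := by linear_combination h3
      rw [hnum, zero_div]
    by_cases hm1 : x = -1
    · subst hm1
      have hne : (-1 : F) ≠ 0 := by norm_num
      have hne1 : (-1 : F) ≠ 1 := by
        intro h; exact h2 (by linear_combination -h)
      have hth : (-1 : F) + (-1)⁻¹ = 1 := by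
        rw [inv_neg, inv_one]; linear_combination -h3
      have hpsi : ((-1 : F) + 1) / (-1 - 1) = 0 := by
        rw [neg_add_cancel, zero_div]
      simp only [theta, psi, sMap, if_neg hne, hth, if_pos rfl, if_neg hne1, hpsi, ↓reduceIte, hne, hne1]
    · -- generic case
      have hx1 : x - 1 ≠ 0 := sub_ne_zero.mpr h1
      have hxm1 : x + 1 ≠ 0 := by
        intro h; exact hm1 (by linear_combination h)
      have hth : x + x⁻¹ ≠ 1 := by
        intro h
        field_simp at h
        have hsq : (x + 1) ^ 2 = 0 := by linear_combination h + x * h3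
        exact hxm1 (pow_eq_zero_iff (n := 2) (by norm_num) |>.mp hsq)
      have hpsine : (x + 1) / (x - 1) ≠ 0 := div_ne_zero hxm1 hx1
      simp only [theta, psi, sMap, if_neg h0, if_neg hth, if_neg h1, if_neg hpsine, ↓reduceIte, h0, h1, hth, hpsine]
      congr 1
      have hth' : x + x⁻¹ - 1 ≠ 0 := sub_ne_zero.mpr hth
      rw [inv_div, div_pow, div_eq_div_iff hth' (pow_ne_zero _ hxm1)]
      field_simp
      ring_nf
      linear_combination (2 * x + 2 * x ^ 3) * h3

theorem theta_periodic_iff_s_periodic [Fintype F] (n : ℕ) (hn : 0 < n)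
    (hF : Fintype.card F = 3 ^ n)
    (α : OnePoint F) (hα1 : α ≠ ((1 : F) : OnePoint F))
    (hα2 : α ≠ ((-1 : F) : OnePoint F)) (hα3 : α ≠ ∞)
    (k : ℕ) (hk : 0 < k) :
    (theta F)^[k] α = α ↔ (sMap F)^[k] (psi F α) = psi F α := by
  have h3 : (3 : F) = 0 := by
    have hc : ((Fintype.card F : ℕ) : F) = 0 := FiniteField.cast_card_eq_zero F
    rw [hF] at hc
    push_cast at hc
    exact pow_eq_zero_iff hn.ne' |>.mp hc
  have hsemi : ∀ m : ℕ, ∀ b : OnePoint F,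
      psi F ((theta F)^[m] b) = (sMap F)^[m] (psi F b) := by
    intro m
    induction m with
    | zero => intro b; simp
    | succ m ih =>
      intro b
      rw [Function.iterate_succ_apply, Function.iterate_succ_apply,
        ih (theta F b), conj_lemma F h3]
  have hinj : Function.Injective (psi F) :=
    Function.LeftInverse.injective (psi_involution F h3)
  constructor
  · intro h
    rw [← hsemi k α, h]
  · intro h
    apply hinj
    rw [hsemi k α, h]
end

section
/- For each odd divisor d > 1 of 3^n − 1, the θ-periodic points α with ord(ψ(α)) = d number exactly φ(d), and they are partitioned into φ(d)/ord_d(−2) cycles of θ, each of length ord_d(−2). -/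
open OnePoint

variable (F : Type*) [Field F] [DecidableEq F]

lemma psi_some (x : F) :
    psi F (Option.some x) = if x = 1 then ∞ else Option.some ((x + 1) / (x - 1)) := rfl

lemma psi_none : psi F (Option.none) = Option.some 1 := rfl

lemma theta_some (x : F) :
    theta F (Option.some x) = if x = 0 then ∞ else Option.some (x + x⁻¹) := rfl

lemma sMap_some (x : F) :
    sMap F (Option.some x) = if x = 0 then ∞ else Option.some (x⁻¹ ^ 2) := rfl

lemma infty_eq_none : (∞ : OnePoint F) = Option.none := rfl

variable {F}

lemma psi_invol (h2 : (2 : F) ≠ 0) : Function.Involutive (psi F) := by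
  intro a
  match a with
  | Option.none =>
      erw [psi_none, psi_some, if_pos rfl, infty_eq_none]
  | Option.some x =>
      by_cases hx : x = 1
      · subst hx
        erw [psi_some, if_pos rfl, infty_eq_none, psi_none]
      · have hx1 : x - 1 ≠ 0 := sub_ne_zero.mpr hx
        erw [psi_some, if_neg hx, psi_some]
        have hne : (x + 1) / (x - 1) ≠ 1 := by
          intro h
          rw [div_eq_one_iff_eq hx1] at h
          exact h2 (by linear_combination h)
        erw [if_neg hne]
        congr 1
        field_simp
        rw [show x + 1 - (x - 1) = (1:F) + 1 by ring]
        rw [div_eq_iff (show (1:F) + 1 ≠ 0 by intro h; exact h2 (by linear_combination h))]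
        ring

lemma psi_theta (h3 : (3 : F) = 0) :
    ∀ a, psi F (theta F a) = sMap F (psi F a) := by
  have h2' : (2 : F) ≠ 0 := by
    intro h
    exact one_ne_zero (by linear_combination h3 - h)
  intro a
  match a with
  | Option.none =>
      erw [show theta F Option.none = Option.none from rfl, psi_none, sMap_some,
        if_neg one_ne_zero]
      norm_num; rfl
  | Option.some x =>
      by_cases hx0 : x = 0
      · subst hx0
        erw [theta_some, if_pos rfl, infty_eq_none, psi_none, psi_some, if_neg zero_ne_one]
        have e1 : ((0:F)+1)/(0-1) = -1 := by norm_num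
        erw [e1, sMap_some, if_neg (neg_ne_zero.mpr one_ne_zero)]
        norm_num; rfl
      by_cases hx1 : x = 1
      · subst hx1
        erw [theta_some, if_neg one_ne_zero, inv_one, psi_some,
          if_neg (show (1:F) + 1 ≠ 1 by intro h; exact one_ne_zero (by linear_combination h)),
          psi_some, if_pos rfl]
        have e1 : ((1:F) + 1 + 1) / (1 + 1 - 1) = 0 := by
          rw [show (1:F)+1+1 = 3 by ring, h3]; simp
        rw [e1]
        rfl
      by_cases hxm1 : x = -1
      · subst hxm1
        have hm1 : (-1 : F) ≠ 0 := neg_ne_zero.mpr one_ne_zero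
        have hval : (-1 : F) + (-1)⁻¹ = 1 := by
          rw [show ((-1:F))⁻¹ = -1 by norm_num]
          linear_combination -h3
        erw [theta_some, if_neg hm1, hval, psi_some, if_pos rfl, psi_some,
          if_neg (show (-1:F) ≠ 1 by intro h; exact one_ne_zero (by linear_combination h3 + h))]
        have e1 : ((-1:F) + 1) / (-1 - 1) = 0 := by norm_num
        erw [e1, sMap_some, if_pos rfl]
      · -- generic case
        have hx1' : x - 1 ≠ 0 := sub_ne_zero.mpr hx1
        have hxp1 : x + 1 ≠ 0 := fun h => hxm1 (by linear_combination h)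
        have hq : x ^ 2 - x + 1 ≠ 0 := by
          intro h
          apply hxp1
          have hsq : (x + 1) ^ 2 = 0 := by linear_combination h + x * h3
          exact pow_eq_zero_iff (two_ne_zero) |>.mp hsq
        have hratio : (x + 1) / (x - 1) ≠ 0 := div_ne_zero hxp1 hx1'
        have hinv : x * x⁻¹ = 1 := mul_inv_cancel₀ hx0
        have hth1 : x + x⁻¹ ≠ 1 := by
          intro h
          apply hxp1
          have hx2 : x ^ 2 + 1 = x := by linear_combination x * h - hinv
          have hsq : (x + 1) ^ 2 = 0 := by linear_combination hx2 + x * h3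
          exact pow_eq_zero_iff (two_ne_zero) |>.mp hsq
        erw [theta_some, if_neg hx0, psi_some, if_neg hth1, psi_some, if_neg hx1,
          sMap_some, if_neg hratio]
        congr 1
        rw [inv_div, div_pow]
        rw [div_eq_div_iff]
        · linear_combination (2 * x ^ 2 + 2) * h3 + 4 * hinv
        · intro h
          apply hq
          have : x * (x + x⁻¹ - 1) = x ^ 2 - x + 1 := by
            field_simp; ring
          rw [← this, h, mul_zero]
        · exact pow_ne_zero 2 hxp1

lemma sMap_iter (u : Fˣ) (k : ℕ) :
    (sMap F)^[k] (Option.some (u : F)) = Option.some ((u ^ ((-2 : ℤ) ^ k) : Fˣ) : F) := by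
  induction k with
  | zero => simp; rfl
  | succ k ih =>
      erw [Function.iterate_succ_apply', ih, sMap_some, if_neg (Units.ne_zero _)]
      congr 1
      rw [← Units.val_inv_eq_inv_val, ← Units.val_pow_eq_pow_val]
      congr 1
      rw [← zpow_neg, ← zpow_natCast (u ^ (-(-2:ℤ) ^ k)) 2, ← zpow_mul]
      congr 1
      push_cast
      ring

variable (F)

theorem cycles_of_length_ord [Fintype F] (n : ℕ) (hn : 0 < n)
    (hF : Fintype.card F = 3 ^ n) (d : ℕ) (hd1 : 1 < d) (hd2 : Odd d)
    (hd3 : d ∣ 3 ^ n - 1) :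
    let S : Set (OnePoint F) :=
      {α | ∃ b : F, psi F α = (b : OnePoint F) ∧ orderOf b = d}
    let l := orderOf (-2 : ZMod d)
    S.ncard = Nat.totient d ∧
    (∀ α ∈ S, Function.minimalPeriod (theta F) α = l) ∧
    {C : Set (OnePoint F) | ∃ α ∈ S,
        C = Set.range (fun i : ℕ => (theta F)^[i] α)}.ncard =
      Nat.totient d / l := by
  intro S l
  classical
  haveI : NeZero d := ⟨by omega⟩
  have hd0 : 0 < d := by omega
  have coe_eq_some : ∀ b : F, (b : OnePoint F) = Option.some b := fun _ => rfl
  -- characteristic 3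
  have h3 : (3 : F) = 0 := by
    have hc : ((Fintype.card F : ℕ) : F) = 0 := FiniteField.cast_card_eq_zero F
    rw [hF] at hc
    push_cast at hc
    exact pow_eq_zero_iff hn.ne' |>.mp hc
  have h2' : (2 : F) ≠ 0 := fun h => one_ne_zero (by linear_combination h3 - h)
  have hinv := psi_invol h2'
  have hinj : Function.Injective (psi F) := hinv.injective
  have hsemi : Function.Semiconj (psi F) (theta F) (sMap F) := psi_theta h3
  -- positivity of l
  have hunit2 : IsUnit (-2 : ZMod d) := by
    have : IsUnit ((2 : ℕ) : ZMod d) :=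
      (ZMod.isUnit_iff_coprime 2 d).mpr (Odd.coprime_two_left hd2)
    simpa using this.neg
  have hlpos : 0 < l := by
    obtain ⟨w, hw⟩ := hunit2
    have hlw : l = orderOf w := by show orderOf _ = _; rw [← hw, orderOf_units]
    rw [hlw]
    exact orderOf_pos w
  -- unit extraction
  have hS_unit : ∀ α ∈ S, ∃ u : Fˣ,
      psi F α = Option.some ((u : F)) ∧ orderOf u = d := by
    intro α hα
    obtain ⟨b, hb, hbo⟩ := hα
    have hfin : IsOfFinOrder b := by rw [← orderOf_pos_iff, hbo]; exact hd0
    obtain ⟨u, hu⟩ := hfin.isUnit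
    refine ⟨u, ?_, ?_⟩
    · rw [hb, coe_eq_some, hu]
    · rw [← orderOf_units, hu]
      exact hbo
  -- key periodicity criterion
  have hper : ∀ α ∈ S, ∀ k : ℕ,
      Function.IsPeriodicPt (theta F) k α ↔ (-2 : ZMod d) ^ k = 1 := by
    intro α hα k
    obtain ⟨u, hu, huo⟩ := hS_unit α hα
    have hiter : psi F ((theta F)^[k] α)
        = Option.some ((u ^ ((-2 : ℤ) ^ k) : Fˣ) : F) := by
      rw [hsemi.iterate_right k α, hu, sMap_iter]
    constructor
    · intro hk
      have heq := congrArg (psi F) hk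
      rw [hiter, hu] at heq
      have hu_eq : u ^ ((-2 : ℤ) ^ k) = u := Units.ext (Option.some_injective F heq)
      have h1 : u ^ ((-2 : ℤ) ^ k - 1) = 1 := by
        rw [zpow_sub, zpow_one, hu_eq]
        group
      have hdvd : ((d : ℤ)) ∣ ((-2 : ℤ) ^ k - 1) := by
        rw [← huo]
        exact orderOf_dvd_iff_zpow_eq_one.mpr h1
      have hz := (ZMod.intCast_zmod_eq_zero_iff_dvd _ d).mpr hdvd
      push_cast at hz
      linear_combination hz
    · intro hk
      have hz : (((-2 : ℤ) ^ k - 1 : ℤ) : ZMod d) = 0 := by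
        push_cast
        rw [hk]
        ring
      have hdvd : ((d : ℤ)) ∣ ((-2 : ℤ) ^ k - 1) :=
        (ZMod.intCast_zmod_eq_zero_iff_dvd _ d).mp hz
      have h1 : u ^ ((-2 : ℤ) ^ k - 1) = 1 :=
        orderOf_dvd_iff_zpow_eq_one.mp (by rw [huo]; exact hdvd)
      rw [zpow_sub, zpow_one] at h1
      have hu_eq : u ^ ((-2 : ℤ) ^ k) = u := mul_inv_eq_one.mp h1
      show (theta F)^[k] α = α
      apply hinj
      rw [hiter, hu, hu_eq]
  -- minimal periods
  have hmp : ∀ α ∈ S, Function.minimalPeriod (theta F) α = l := by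
    intro α hα
    have hpl : Function.IsPeriodicPt (theta F) l α :=
      (hper α hα l).mpr (pow_orderOf_eq_one _)
    refine Nat.dvd_antisymm hpl.minimalPeriod_dvd ?_
    exact orderOf_dvd_of_pow_eq_one
      ((hper α hα _).mp (Function.isPeriodicPt_minimalPeriod _ _))
  -- S is invariant under theta
  have hSinv : ∀ α ∈ S, theta F α ∈ S := by
    intro α hα
    obtain ⟨u, hu, huo⟩ := hS_unit α hα
    refine ⟨((u ^ ((-2 : ℤ) ^ 1) : Fˣ) : F), ?_, ?_⟩
    · rw [coe_eq_some]
      have h1 : psi F (theta F α) = sMap F (psi F α) := hsemi α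
      rw [h1, hu, ← Function.iterate_one (sMap F), sMap_iter]
    · have he : u ^ ((-2 : ℤ) ^ 1) = (u⁻¹) ^ (2 : ℕ) := by
        rw [pow_one, inv_pow, ← zpow_natCast, ← zpow_neg]
        norm_num
      have hg : Nat.gcd d 2 = 1 := hd2.coprime_two_right
      rw [orderOf_units, he, orderOf_pow, orderOf_inv, huo, hg, Nat.div_one]
  -- iterates stay in S
  have hSit : ∀ α ∈ S, ∀ i : ℕ, (theta F)^[i] α ∈ S := by
    intro α hα i
    induction i with
    | zero => simpa using hα
    | succ i ih => rw [Function.iterate_succ_apply']; exact hSinv _ ih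
  -- orbits
  let O : OnePoint F → Set (OnePoint F) := fun a => Set.range fun i : ℕ => (theta F)^[i] a
  have hOmem : ∀ a, a ∈ O a := fun a => ⟨0, rfl⟩
  have hOsub : ∀ α ∈ S, O α ⊆ S := by
    rintro α hα _ ⟨i, rfl⟩
    exact hSit α hα i
  have hOcard : ∀ α ∈ S, (O α).ncard = l := by
    intro α hα
    have hm := hmp α hα
    have himg : O α = (fun i : ℕ => (theta F)^[i] α) '' Set.Iio l := by
      apply Set.Subset.antisymm
      · rintro _ ⟨i, rfl⟩
        refine ⟨i % l, Nat.mod_lt i hlpos, ?_⟩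
        rw [← hm]
        exact Function.iterate_mod_minimalPeriod_eq
      · rintro _ ⟨i, _, rfl⟩
        exact ⟨i, rfl⟩
    rw [himg,
      Set.ncard_image_of_injOn (by rw [← hm]; exact Function.iterate_injOn_Iio_minimalPeriod),
      ← Finset.coe_Iio, Set.ncard_coe_finset, Nat.card_Iio]
  have hOeq : ∀ α ∈ S, ∀ β ∈ O α, O β = O α := by
    intro α hα β hβ
    obtain ⟨i, rfl⟩ := hβ
    have hsub : ∀ (j : ℕ) (γ : OnePoint F), O ((theta F)^[j] γ) ⊆ O γ := by
      rintro j γ _ ⟨m, rfl⟩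
      refine ⟨m + j, ?_⟩
      show (theta F)^[m + j] γ = (theta F)^[m] ((theta F)^[j] γ)
      rw [Function.iterate_add_apply]
    apply Set.Subset.antisymm (hsub i α)
    have hpl : Function.IsPeriodicPt (theta F) l α :=
      (hper α hα l).mpr (pow_orderOf_eq_one _)
    have hα_mem : α ∈ O ((theta F)^[i] α) := by
      refine ⟨(l - 1) * i, ?_⟩
      show (theta F)^[(l - 1) * i] ((theta F)^[i] α) = α
      rw [← Function.iterate_add_apply]
      have hle : i ≤ l * i := Nat.le_mul_of_pos_left i hlpos
      have hsum : (l - 1) * i + i = l * i := by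
        rw [Nat.sub_one_mul]
        omega
      rw [hsum]
      exact hpl.mul_const i
    obtain ⟨m, hm'⟩ := hα_mem
    have hm'' : (theta F)^[m] ((theta F)^[i] α) = α := hm'
    have hfin := hsub m ((theta F)^[i] α)
    rwa [hm''] at hfin
  -- cardinality of S
  have hScard : S.ncard = Nat.totient d := by
    have hSeq : S = (fun b : F => psi F (Option.some b)) '' {b : F | orderOf b = d} := by
      ext α
      constructor
      · rintro ⟨b, hb, hbo⟩
        rw [coe_eq_some] at hb
        have hinvα := hinv α
        rw [hb] at hinvα
        refine ⟨b, hbo, ?_⟩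
        show psi F (Option.some b) = α
        exact hinvα
      · rintro ⟨b, hbo, rfl⟩
        refine ⟨b, ?_, hbo⟩
        show psi F ((fun b : F => psi F (Option.some b)) b) = (b : OnePoint F)
        rw [coe_eq_some]
        exact hinv (Option.some b)
    have hcomp : Function.Injective (fun b : F => psi F (Option.some b)) :=
      fun a b h => Option.some_injective F (hinj h)
    rw [hSeq, Set.ncard_image_of_injective _ hcomp]
    have hUeq : {b : F | orderOf b = d} = Units.val '' {u : Fˣ | orderOf u = d} := by
      ext b
      constructor
      · intro hb
        have hbo : orderOf b = d := hb
        have hfin : IsOfFinOrder b := by rw [← orderOf_pos_iff, hbo]; exact hd0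
        obtain ⟨u, hu⟩ := hfin.isUnit
        refine ⟨u, ?_, hu⟩
        show orderOf u = d
        rw [← orderOf_units, hu]
        exact hbo
      · rintro ⟨u, hu, rfl⟩
        show orderOf (u : F) = d
        rw [orderOf_units]
        exact hu
    rw [hUeq, Set.ncard_image_of_injective _ Units.val_injective]
    have hcardeq : ({u : Fˣ | orderOf u = d}).ncard
        = (Finset.univ.filter fun u : Fˣ => orderOf u = d).card := by
      rw [← Set.ncard_coe_finset]
      congr 1
      ext u
      simp
    rw [hcardeq]
    apply IsCyclic.card_orderOf_eq_totient
    rw [Fintype.card_units, hF]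
    exact hd3
  -- conclusion
  refine ⟨hScard, hmp, ?_⟩
  haveI : Finite (OnePoint F) := inferInstanceAs (Finite (Option F))
  have hSfin : S.Finite := Set.toFinite S
  set s : Finset (OnePoint F) := hSfin.toFinset with hs
  have hmem_s : ∀ a, a ∈ s ↔ a ∈ S := fun a => hSfin.mem_toFinset
  have himgmem : ∀ a ∈ s, O a ∈ s.image O := fun a ha => Finset.mem_image_of_mem O ha
  have hsum := Finset.card_eq_sum_card_fiberwise himgmem
  have hfib : ∀ C ∈ s.image O, (s.filter fun a => O a = C).card = l := by
    intro C hC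
    obtain ⟨α, hαs, rfl⟩ := Finset.mem_image.mp hC
    have hαS : α ∈ S := (hmem_s α).mp hαs
    have hset : (↑(s.filter fun a => O a = O α) : Set (OnePoint F)) = O α := by
      ext a
      simp only [Finset.coe_filter, Set.mem_setOf_eq, hmem_s]
      constructor
      · rintro ⟨_, h⟩
        exact h ▸ hOmem a
      · intro h
        exact ⟨hOsub α hαS h, hOeq α hαS a h⟩
    calc (s.filter fun a => O a = O α).card
        = (↑(s.filter fun a => O a = O α) : Set (OnePoint F)).ncard :=
          (Set.ncard_coe_finset _).symm
      _ = (O α).ncard := by rw [hset]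
      _ = l := hOcard α hαS
  have hcardS : s.card = (s.image O).card * l := by
    rw [hsum, Finset.sum_congr rfl hfib, Finset.sum_const, smul_eq_mul]
  have hCset : {C : Set (OnePoint F) | ∃ α ∈ S,
      C = Set.range fun i : ℕ => (theta F)^[i] α} = ↑(s.image O) := by
    ext C
    simp only [Set.mem_setOf_eq, Finset.coe_image, Set.mem_image, Finset.mem_coe, hmem_s]
    constructor
    · rintro ⟨α, hα, rfl⟩
      exact ⟨α, hα, rfl⟩
    · rintro ⟨α, hα, rfl⟩
      exact ⟨α, hα, rfl⟩
  rw [hCset, Set.ncard_coe_finset]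
  have hs_card : s.card = Nat.totient d := by
    rw [← hScard, hs]
    exact (Set.ncard_eq_toFinset_card S hSfin).symm
  have hdiv : (s.image O).card = s.card / l := by
    rw [hcardS, Nat.mul_div_cancel _ hlpos]
  rw [hdiv, hs_card]
end

section
/- Let 2^e be the largest power of 2 dividing 3^n − 1 and let γ ∈ F_{3^n} \ {1, −1} be non-θ-periodic. If 2^e does not divide ord(ψ(γ)), then there exist exactly two distinct x ∈ F_{3^n} with θ(x) = γ; if 2^e divides ord(ψ(γ)), there is no such x. -/
open OnePoint

variable (F : Type*) [Field F] [DecidableEq F]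

/-- Auxiliary number-theory lemma. -/
lemma aux_dvd_lemma (d e t : ℕ) (ht : ¬ 2 ∣ t) (he : 1 ≤ e) (hd : d ≠ 0)
    (hdvd : d ∣ 2 ^ e * t) : d ∣ 2 ^ (e - 1) * t ↔ ¬ 2 ^ e ∣ d := by
  constructor
  · intro h1 h2
    have h3 : 2 ^ e ∣ 2 ^ (e - 1) * t := h2.trans h1
    have h4 : 2 ^ e = 2 ^ (e - 1) * 2 := by
      rw [← pow_succ]
      congr 1
      omega
    rw [h4] at h3
    have h5 : (2:ℕ) ∣ t := (mul_dvd_mul_iff_left (a := 2 ^ (e-1))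
      (by positivity)).mp h3
    exact ht h5
  · intro h2
    have hfac : d.factorization 2 ≤ e - 1 := by
      by_contra hc
      exact h2 ((Nat.Prime.pow_dvd_iff_le_factorization Nat.prime_two hd).mpr (by omega))
    have hproj : 2 ^ d.factorization 2 ∣ 2 ^ (e - 1) := pow_dvd_pow 2 hfac
    have ht0 : t ≠ 0 := by rintro rfl; exact ht (dvd_zero 2)
    have hcompl : ordCompl[2] d ∣ ordCompl[2] (2 ^ e * t) :=
      Nat.ordCompl_dvd_ordCompl_of_dvd hdvd 2
    have hfacN : (2 ^ e * t).factorization 2 = e := by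
      rw [Nat.factorization_mul (by positivity) ht0,
        Nat.Prime.factorization_pow Nat.prime_two]
      simp [Nat.factorization_eq_zero_of_not_dvd ht]
    have hcompl' : ordCompl[2] (2 ^ e * t) = t := by
      rw [hfacN, Nat.mul_div_cancel_left _ (by positivity)]
    rw [hcompl'] at hcompl
    calc d = 2 ^ d.factorization 2 * ordCompl[2] d :=
            (Nat.ordProj_mul_ordCompl_eq_self d 2).symm
      _ ∣ 2 ^ (e - 1) * t := mul_dvd_mul hproj hcompl

theorem preimages_of_nonperiodic [Fintype F] (n : ℕ) (hn : 0 < n)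
    (hF : Fintype.card F = 3 ^ n) (e : ℕ)
    (he : 2 ^ e ∣ 3 ^ n - 1 ∧ ¬ 2 ^ (e + 1) ∣ 3 ^ n - 1)
    (γ : F) (hγ1 : γ ≠ 1) (hγ2 : γ ≠ -1)
    (hγp : ¬ ∃ k : ℕ, 0 < k ∧ (theta F)^[k] (γ : OnePoint F) = (γ : OnePoint F))
    (b : F) (hb : psi F (γ : OnePoint F) = (b : OnePoint F)) :
    (¬ 2 ^ e ∣ orderOf b →
      {x : F | theta F (x : OnePoint F) = (γ : OnePoint F)}.ncard = 2) ∧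
    (2 ^ e ∣ orderOf b →
      {x : F | theta F (x : OnePoint F) = (γ : OnePoint F)} = ∅) := by
  clear hγp
  -- characteristic 3
  have hchar : ringChar F = 3 := by
    obtain ⟨m, hp, hcard⟩ := FiniteField.card F (ringChar F)
    have hdvd : ringChar F ∣ 3 ^ n := by
      rw [← hF, hcard]
      exact dvd_pow_self _ (by exact_mod_cast m.pos.ne')
    have := hp.dvd_of_dvd_pow hdvd
    exact (Nat.prime_dvd_prime_iff_eq hp (by norm_num)).mp this
  have h3 : (3 : F) = 0 := by
    have := ringChar.Nat.cast_ringChar (R := F)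
    rw [hchar] at this
    exact_mod_cast this
  have h2ne : ringChar F ≠ 2 := by rw [hchar]; norm_num
  have h2F : (2 : F) ≠ 0 := by
    intro h
    have : (1 : F) = 0 := by linear_combination h3 - h
    exact one_ne_zero this
  have hγm1 : γ - 1 ≠ 0 := sub_ne_zero.mpr hγ1
  have hγp1 : γ + 1 ≠ 0 := by
    intro h; exact hγ2 (by linear_combination h)
  -- value of b
  have hb' : (if γ = 1 then (∞ : OnePoint F) else Option.some ((γ + 1) / (γ - 1)))
      = Option.some b := hb
  replace hb' : (Option.some ((γ + 1) / (γ - 1)) : Option F) = Option.some b := (if_neg hγ1).symm.trans hb'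
  have hbv : b = (γ + 1) / (γ - 1) := (Option.some_inj.mp hb').symm
  have hbne : b ≠ 0 := by
    rw [hbv]
    exact div_ne_zero hγp1 hγm1
  -- the solution set
  have hset : {x : F | theta F (x : OnePoint F) = (γ : OnePoint F)}
      = {x : F | (x + γ) ^ 2 = γ ^ 2 - 1} := by
    ext x
    simp only [Set.mem_setOf_eq]
    constructor
    · intro hx
      have hx' : (if x = 0 then (∞ : OnePoint F) else Option.some (x + x⁻¹))
          = Option.some γ := hx
      by_cases hx0 : x = 0
      · replace hx' : (∞ : OnePoint F) = Option.some γ := (if_pos hx0).symm.trans hx'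
        exact absurd hx' (by simp [OnePoint.infty])
      · replace hx' : (Option.some (x + x⁻¹) : Option F) = Option.some γ := (if_neg hx0).symm.trans hx'
        have hxe : x + x⁻¹ = γ := Option.some_inj.mp hx'
        field_simp at hxe
        linear_combination hxe + γ * x * h3
    · intro hx
      have hx0 : x ≠ 0 := by
        rintro rfl
        have : (1 : F) = 0 := by linear_combination hx
        exact one_ne_zero this
      have hxe : x + x⁻¹ = γ := by
        field_simp
        linear_combination hx - γ * x * h3
      show (if x = 0 then (∞ : OnePoint F) else Option.some (x + x⁻¹)) = Option.some γ
      exact (if_neg hx0).trans (by rw [hxe])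
  -- squareness transfer
  have hsq : IsSquare (γ ^ 2 - 1) ↔ IsSquare b := by
    constructor
    · rintro ⟨c, hc⟩
      exact ⟨c / (γ - 1), by rw [hbv]; field_simp; linear_combination hc⟩
    · rintro ⟨r, hr⟩
      refine ⟨r * (γ - 1), ?_⟩
      have : b * (γ - 1) ^ 2 = γ ^ 2 - 1 := by
        rw [hbv]; field_simp; ring
      rw [hr] at this
      linear_combination -this
  -- arithmetic of the order
  have hodd3n : Odd (3 ^ n) := Odd.pow (by decide : Odd 3)
  set m := 3 ^ n - 1 with hm
  have hm1 : 3 ^ n = m + 1 := by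
    have : 1 ≤ 3 ^ n := Nat.one_le_pow _ _ (by norm_num)
    omega
  have hmeven : 2 ∣ m := by
    obtain ⟨k, hk⟩ := hodd3n
    omega
  have he1 : 1 ≤ e := by
    by_contra hc
    have : e = 0 := by omega
    rw [this] at he
    exact he.2 (by simpa using hmeven)
  set t := m / 2 ^ e with htdef
  have hmt : m = 2 ^ e * t := (Nat.mul_div_cancel' he.1).symm
  have htodd : ¬ 2 ∣ t := by
    intro ⟨u, hu⟩
    exact he.2 ⟨u, by rw [hmt, hu, pow_succ]; ring⟩
  have hpow2 : 2 ^ e = 2 * 2 ^ (e - 1) := by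
    rw [← pow_succ']
    congr 1
    omega
  have hcard2 : Fintype.card F / 2 = 2 ^ (e - 1) * t := by
    rw [hF, hm1, hmt, hpow2, mul_assoc]
    set K := 2 ^ (e - 1) * t
    omega
  have hordvd : orderOf b ∣ 2 ^ e * t := by
    rw [← hmt]
    apply orderOf_dvd_of_pow_eq_one
    rw [hm, ← hF]
    exact FiniteField.pow_card_sub_one_eq_one b hbne
  have hmpos : 0 < m := by
    have : 3 ≤ 3 ^ n := Nat.le_self_pow hn.ne' 3
    omega
  have hordne : orderOf b ≠ 0 := by
    intro h
    rw [h] at hordvd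
    have := Nat.eq_zero_of_zero_dvd hordvd
    omega
  have hkey : IsSquare b ↔ ¬ 2 ^ e ∣ orderOf b := by
    rw [FiniteField.isSquare_iff h2ne hbne, hcard2, ← orderOf_dvd_iff_pow_eq_one]
    exact aux_dvd_lemma _ e t htodd he1 hordne hordvd
  constructor
  · intro hdvd
    obtain ⟨c, hc⟩ := hsq.mpr (hkey.mpr hdvd)
    have hcne : c ≠ 0 := by
      rintro rfl
      apply hγm1
      have : (γ - 1) * (γ + 1) = 0 := by linear_combination hc
      rcases mul_eq_zero.mp this with h | h
      · exact absurd h hγm1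
      · exact absurd h hγp1
    rw [hset]
    have : {x : F | (x + γ) ^ 2 = γ ^ 2 - 1} = {c - γ, -c - γ} := by
      ext x
      simp only [Set.mem_setOf_eq, Set.mem_insert_iff, Set.mem_singleton_iff]
      constructor
      · intro hx
        have : (x - (c - γ)) * (x - (-c - γ)) = 0 := by
          linear_combination hx + hc
        rcases mul_eq_zero.mp this with h | h
        · left; linear_combination h
        · right; linear_combination h
      · rintro (rfl | rfl) <;> linear_combination -hc
    rw [this]
    apply Set.ncard_pair
    intro h
    apply hcne
    have h2c : (2 : F) * c = 0 := by linear_combination h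
    rcases mul_eq_zero.mp h2c with h' | h'
    · exact absurd h' h2F
    · exact h'
  · intro hdvd
    rw [hset]
    rw [Set.eq_empty_iff_forall_notMem]
    intro x hx
    have : IsSquare (γ ^ 2 - 1) := ⟨x + γ, by rw [← hx]; ring⟩
    exact (hkey.mp (hsq.mp this)) hdvd
end

section
/- For γ ∈ F_{3^n} \ {1, −1}, the equation θ(x) = γ has a solution x ∈ F_{3^n} if and only if ψ(γ) is a nonzero square in F_{3^n}, equivalently if and only if ord(ψ(γ)) divides (3^n − 1)/2. -/
open OnePoint

variable (F : Type*) [Field F] [DecidableEq F]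

theorem solvable_iff_square [Fintype F] (n : ℕ) (hn : 0 < n)
    (hF : Fintype.card F = 3 ^ n)
    (γ : F) (hγ1 : γ ≠ 1) (hγ2 : γ ≠ -1)
    (b : F) (hb : psi F (γ : OnePoint F) = (b : OnePoint F)) :
    ((∃ x : F, theta F (x : OnePoint F) = (γ : OnePoint F)) ↔
      (b ≠ 0 ∧ ∃ y : F, y ≠ 0 ∧ y ^ 2 = b)) ∧
    ((∃ x : F, theta F (x : OnePoint F) = (γ : OnePoint F)) ↔
      orderOf b ∣ (3 ^ n - 1) / 2) := by
  -- characteristic 3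
  have hcard : ((3 ^ n : ℕ) : F) = 0 := by
    rw [← hF]; exact FiniteField.cast_card_eq_zero F
  have h3 : (3 : F) = 0 := by
    have : ((3 : ℕ) : F) ^ n = 0 := by
      rw [← Nat.cast_pow]; exact hcard
    have := pow_eq_zero_iff hn.ne' |>.mp this
    simpa using this
  have hchar : ringChar F = 3 :=
    CharP.ringChar_of_prime_eq_zero (by norm_num) h3
  have h2 : (2 : F) = -1 := by linear_combination h3
  have hγm : γ - 1 ≠ 0 := sub_ne_zero.mpr hγ1
  have hγp : γ + 1 ≠ 0 := by
    intro h; exact hγ2 (by linear_combination h)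
  -- value of b
  have hb' : b = (γ + 1) / (γ - 1) := by
    have : psi F (γ : OnePoint F) = Option.some ((γ + 1) / (γ - 1)) := by
      show (if γ = 1 then ∞ else Option.some ((γ + 1) / (γ - 1))) = _
      exact if_neg hγ1
    rw [this] at hb
    exact (Option.some.injEq _ _).mp hb.symm
  have hbne : b ≠ 0 := by
    rw [hb']; exact div_ne_zero hγp hγm
  -- solvability of theta reformulated
  have hsolv : (∃ x : F, theta F (x : OnePoint F) = (γ : OnePoint F)) ↔
      (∃ x : F, x ≠ 0 ∧ x + x⁻¹ = γ) := by
    constructor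
    · rintro ⟨x, hx⟩
      by_cases h0 : x = 0
      · exfalso
        have : theta F (x : OnePoint F) = ∞ := by
          show (if x = 0 then ∞ else _) = ∞; exact if_pos h0
        rw [this] at hx
        exact OnePoint.infty_ne_coe γ hx
      · refine ⟨x, h0, ?_⟩
        have : theta F (x : OnePoint F) = Option.some (x + x⁻¹) := by
          show (if x = 0 then ∞ else _) = _; exact if_neg h0
        rw [this] at hx
        exact (Option.some.injEq _ _).mp hx
    · rintro ⟨x, h0, hx⟩
      refine ⟨x, ?_⟩
      show (if x = 0 then ∞ else Option.some (x + x⁻¹)) = _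
      exact (if_neg h0).trans (congrArg _ hx)
  -- first equivalence
  have hmain : (∃ x : F, x ≠ 0 ∧ x + x⁻¹ = γ) ↔ (∃ y : F, y ≠ 0 ∧ y ^ 2 = b) := by
    constructor
    · rintro ⟨x, h0, hx⟩
      -- x^2 - γ x + 1 = 0
      have heq : x ^ 2 - γ * x + 1 = 0 := by
        have := hx
        field_simp at this
        linear_combination this
      refine ⟨(x + γ) / (γ - 1), ?_, ?_⟩
      · -- nonzero: else x = -γ, then from heq: γ^2+γ^2+1=... check below via square
        intro h
        have hd : x + γ = 0 := by
          have := div_eq_zero_iff.mp h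
          rcases this with h' | h'
          · exact h'
          · exact absurd h' hγm
        -- then x = -γ, heq gives γ^2 + γ^2 + 1 = 0, i.e. 2γ^2+1=0, i.e. -γ^2+1=0, γ=±1
        have hx2 : x = -γ := by linear_combination hd
        rw [hx2] at heq
        -- heq : γ^2 + γ^2 + 1 = 0 i.e. (γ-1)(γ+1) = ... in char 3: 2γ²+1 = -γ²+1 = -(γ-1)(γ+1)
        have : (γ - 1) * (γ + 1) = 0 := by linear_combination -heq + γ^2 * h3
        rcases mul_eq_zero.mp this with h' | h'
        · exact hγm h'
        · exact hγp h'
      · rw [hb']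
        rw [div_pow, div_eq_div_iff (pow_ne_zero 2 hγm) hγm]
        ring_nf
        linear_combination (γ - 1) * heq + (x*γ^2 - x*γ) * h3
    · rintro ⟨y, hy0, hy⟩
      set d := y * (γ - 1) with hd
      have hd2 : d ^ 2 = γ ^ 2 - 1 := by
        have : y ^ 2 = (γ + 1) / (γ - 1) := by rw [← hb']; exact hy
        rw [eq_div_iff hγm] at this
        rw [hd]; ring_nf
        linear_combination (γ-1) * this
      refine ⟨d - γ, ?_, ?_⟩
      · intro h
        have hx2 : d = γ := by linear_combination h
        rw [hx2] at hd2
        -- γ² = γ² - 1, contradiction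
        have : (1 : F) = 0 := by linear_combination hd2
        exact one_ne_zero this
      · have hne : d - γ ≠ 0 := by
          intro h
          have hx2 : d = γ := by linear_combination h
          rw [hx2] at hd2
          exact one_ne_zero (by linear_combination hd2)
        have heq2 : (d - γ) ^ 2 - γ * (d - γ) + 1 = 0 := by
          linear_combination hd2 + (γ^2 - d*γ) * h3
        field_simp
        linear_combination heq2
  have hfirst : (∃ x : F, theta F (x : OnePoint F) = (γ : OnePoint F)) ↔
      (b ≠ 0 ∧ ∃ y : F, y ≠ 0 ∧ y ^ 2 = b) := by
    rw [hsolv, hmain]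
    exact ⟨fun h => ⟨hbne, h⟩, fun h => h.2⟩
  refine ⟨hfirst, ?_⟩
  rw [hfirst]
  -- now: b ≠ 0 ∧ nonzero sqrt ↔ orderOf b ∣ (3^n-1)/2
  have hsq : IsSquare b ↔ b ^ (Fintype.card F / 2) = 1 :=
    FiniteField.isSquare_iff (by rw [hchar]; norm_num) hbne
  have hdivnum : Fintype.card F / 2 = (3 ^ n - 1) / 2 := by
    rw [hF]
    have : Odd (3 ^ n) := Odd.pow ⟨1, by norm_num⟩
    obtain ⟨k, hk⟩ := this
    omega
  constructor
  · rintro ⟨-, y, hy0, hy⟩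
    rw [← hdivnum, orderOf_dvd_iff_pow_eq_one, ← hsq]
    exact ⟨y, by rw [← hy]; ring⟩
  · intro h
    rw [← hdivnum, orderOf_dvd_iff_pow_eq_one, ← hsq] at h
    obtain ⟨r, hr⟩ := h
    refine ⟨hbne, r, ?_, by rw [hr]; ring⟩
    intro h0
    rw [h0, mul_zero] at hr
    exact hbne hr
end

section
/- The point 0 is the unique non-periodic preimage of the fixed point ∞ under θ, and ψ(0) = −1 has multiplicative order 2 in F_{3^n}*; thus ∞ is the root of a reversed binary tree whose unique level-1 vertex is 0. -/
open OnePoint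

variable (F : Type*) [Field F] [DecidableEq F]

lemma char3 [Fintype F] (n : ℕ) (hF : Fintype.card F = 3 ^ n) : ringChar F = 3 := by
  haveI : Fact (Nat.Prime (ringChar F)) := ⟨CharP.char_is_prime F _⟩
  obtain ⟨m, hp, hcard⟩ := FiniteField.card F (ringChar F)
  have hdvd : ringChar F ∣ 3 ^ n := by
    rw [← hF, hcard]
    exact dvd_pow_self _ m.pos.ne'
  have := (Nat.prime_dvd_prime_iff_eq hp (by norm_num)).mp (hp.dvd_of_dvd_pow hdvd)
  exact this

theorem tree_at_infinity [Fintype F] (n : ℕ) (hn : 0 < n)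
    (hF : Fintype.card F = 3 ^ n) :
    theta F ∞ = ∞ ∧
    (∀ x : OnePoint F, theta F x = ∞ ↔ x = ((0 : F) : OnePoint F) ∨ x = ∞) ∧
    psi F ((0 : F) : OnePoint F) = ((-1 : F) : OnePoint F) ∧
    orderOf (-1 : F) = 2 ∧
    ¬ ∃ k : ℕ, 0 < k ∧ (theta F)^[k] ((0 : F) : OnePoint F) = ((0 : F) : OnePoint F) := by
  have hchar : ringChar F = 3 := char3 F n hF
  have hcoe : ∀ x : F, ((x : OnePoint F)) = Option.some x := fun _ => rfl
  have hinf : (∞ : OnePoint F) = Option.none := rfl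
  refine ⟨rfl, ?_, ?_, ?_, ?_⟩
  · rintro (_ | x)
    · simp [theta, hinf]; exact fun _ => rfl
    · simp only [theta, hcoe, hinf]
      constructor
      · intro h
        split at h
        · left; exact congrArg Option.some (by assumption)
        · exact absurd h (by rename_i hx; intro h'; exact absurd ((if_neg hx : (if x = 0 then (none : Option F) else Option.some (x + x⁻¹)) = _).symm.trans h') nofun)
      · rintro (h | h)
        · obtain rfl : x = 0 := Option.some.inj h
          simp; rfl
        · exact absurd h (by simp)
  · simp only [psi, hcoe]
    norm_num; rfl
  · rw [orderOf_neg_one, if_neg (by rw [hchar]; norm_num)]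
  · rintro ⟨k, hk, hiter⟩
    obtain ⟨k, rfl⟩ := Nat.exists_eq_succ_of_ne_zero hk.ne'
    rw [Function.iterate_succ_apply] at hiter
    have h0 : theta F ((0 : F) : OnePoint F) = ∞ := by simp [theta, hcoe]
    rw [h0, Function.iterate_fixed rfl] at hiter
    exact OnePoint.infty_ne_coe _ hiter
end
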